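/- If P, Q, n are odd integers with n ≡ 3 (mod 6) and Q ≡ 3 (mod 4), then U_n(P,Q) is not a perfect square. -/
import Mathlib


def lucasU (P Q : ℤ) : ℕ → ℤ
  | 0 => 0
  | 1 => 1
  | (n + 2) => P * lucasU P Q (n + 1) - Q * lucasU P Q n

private lemma lucasU_period (P Q : ℤ) (hp2 : ((P : ZMod 4))^2 = 1)
    (hq : ((Q : ZMod 4)) = 3) :
    ∀ n : ℕ, ((lucasU P Q (n+6) : ZMod 4)) = ((lucasU P Q n : ZMod 4)) ∧
      ((lucasU P Q (n+7) : ZMod 4)) = ((lucasU P Q (n+1) : ZMod 4)) := by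
  intro n
  induction n with
  | zero =>
      constructor
      · show ((lucasU P Q 6 : ZMod 4)) = ((lucasU P Q 0 : ZMod 4))
        simp only [lucasU]
        push_cast
        rw [hq]
        generalize ((P : ZMod 4)) = p at hp2 ⊢
        revert hp2
        revert p
        decide
      · show ((lucasU P Q 7 : ZMod 4)) = ((lucasU P Q 1 : ZMod 4))
        simp only [lucasU]
        push_cast
        rw [hq]
        generalize ((P : ZMod 4)) = p at hp2 ⊢
        revert hp2
        revert p
        decide
  | succ n ih =>
      obtain ⟨h1, h2⟩ := ih
      refine ⟨h2, ?_⟩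
      have e1 : lucasU P Q (n + 8) = P * lucasU P Q (n + 7) - Q * lucasU P Q (n + 6) := rfl
      have e2 : lucasU P Q (n + 2) = P * lucasU P Q (n + 1) - Q * lucasU P Q n := rfl
      show ((lucasU P Q (n+8) : ZMod 4)) = ((lucasU P Q (n+2) : ZMod 4))
      rw [e1, e2]
      push_cast
      rw [h1, h2]

theorem stmt1 (P Q : ℤ) (n : ℕ) (hP : Odd P) (hQ : Odd Q) (hn : Odd n)
    (hn6 : n % 6 = 3) (hQ4 : Q % 4 = 3) :
    ¬ ∃ k : ℤ, lucasU P Q n = k ^ 2 := by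
  rintro ⟨k, hk⟩
  -- P is odd, so P² ≡ 1 mod 4
  have hp2 : ((P : ZMod 4))^2 = 1 := by
    obtain ⟨m, hm⟩ := hP
    subst hm
    push_cast
    ring_nf
    generalize ((m : ZMod 4)) = x
    revert x
    decide
  have hq : ((Q : ZMod 4)) = 3 := by
    have : Q = 4 * (Q / 4) + 3 := by omega
    rw [this]
    push_cast
    have h4 : ((4 : ℤ) : ZMod 4) = 0 := by decide
    push_cast at h4
    rw [h4]
    ring
  -- U_n mod 4 = U_3 mod 4 = 2
  have hmod : ∀ m : ℕ, ((lucasU P Q (6*m+3) : ZMod 4)) = 2 := by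
    intro m
    induction m with
    | zero =>
        show ((lucasU P Q 3 : ZMod 4)) = 2
        simp only [lucasU]
        push_cast
        rw [hq]
        generalize ((P : ZMod 4)) = p at hp2 ⊢
        revert hp2; revert p; decide
    | succ m ih =>
        have : 6 * (m+1) + 3 = (6*m+3) + 6 := by ring
        rw [this, (lucasU_period P Q hp2 hq (6*m+3)).1, ih]
  obtain ⟨m, hm⟩ : ∃ m, n = 6 * m + 3 := ⟨n / 6, by omega⟩
  have h2 : ((lucasU P Q n : ZMod 4)) = 2 := hm ▸ hmod m
  rw [hk] at h2
  push_cast at h2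
  revert h2
  generalize ((k : ZMod 4)) = x
  revert x
  decide
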